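/- Let N be a DAG with no subdivision vertex in which all leaves have indegree 1, let (x, y) be a reticulated cherry of N, and let N' be the DAG obtained from N by the cherry-picking operation on (x, y). If N' admits a leaf induced path partition, then N admits a leaf induced path partition. -/

import Mathlib

/-!
Finite directed acyclic graphs (DAGs) whose vertex set may shrink under
cherry-picking operations are represented by a pair consisting of a vertex set
`s : Set U` inside an ambient type `U` and an arc relation `A : U → U → Prop`
supported on `s`.
-/

namespace Paper

variable {U : Type*}

/-- `(s, A)` is a finite DAG: the vertex set is finite, arcs join vertices of
`s`, and there is no directed cycle. -/
def IsDag (s : Set U) (A : U → U → Prop) : Prop :=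
  s.Finite ∧ (∀ ⦃u v⦄, A u v → u ∈ s ∧ v ∈ s) ∧ ∀ v, ¬ Relation.TransGen A v v

/-- A leaf of `(s, A)`: a vertex of outdegree 0. -/
def DLeaf (s : Set U) (A : U → U → Prop) (v : U) : Prop :=
  v ∈ s ∧ ∀ w, ¬ A v w

/-- A subdivision vertex of `(s, A)`: indegree 1 and outdegree 1. -/
def IsSubdiv (s : Set U) (A : U → U → Prop) (v : U) : Prop :=
  v ∈ s ∧ (∃! w, A w v) ∧ (∃! w, A v w)

/-- A reticulation of `(s, A)`: a non-leaf vertex of indegree ≥ 2. -/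
def Retic (s : Set U) (A : U → U → Prop) (v : U) : Prop :=
  v ∈ s ∧ (∃ w, A v w) ∧ ∃ u w, u ≠ w ∧ A u v ∧ A w v

/-- `SuppressIf s A w s' A'` holds when `(s', A')` is obtained from `(s, A)` by
suppressing the vertex `w` in case it is a subdivision vertex (deleting it and
adding an arc from its unique in-neighbor to its unique out-neighbor), and by
doing nothing otherwise. -/
def SuppressIf (s : Set U) (A : U → U → Prop) (w : U)
    (s' : Set U) (A' : U → U → Prop) : Prop :=
  (¬ IsSubdiv s A w ∧ s' = s ∧ A' = A) ∨
    (IsSubdiv s A w ∧ ∃ z o, A z w ∧ A w o ∧ s' = s \ {w} ∧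
      A' = fun a b => (A a b ∧ a ≠ w ∧ b ≠ w) ∨ (a = z ∧ b = o))

/-- A standard cherry: a pair of distinct leaves with a common in-neighbor. -/
def StandardCherry (s : Set U) (A : U → U → Prop) (x y : U) : Prop :=
  x ≠ y ∧ DLeaf s A x ∧ DLeaf s A y ∧ ∃ w, A w x ∧ A w y

/-- A reticulated cherry: a pair `(x, y)` of distinct leaves whose respective
in-neighbors `x', y'` are such that `y'` is a reticulation and `(x', y')` is an
arc. -/
def ReticCherry (s : Set U) (A : U → U → Prop) (x y : U) : Prop :=
  x ≠ y ∧ DLeaf s A x ∧ DLeaf s A y ∧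
    ∃ x' y', A x' x ∧ A y' y ∧ Retic s A y' ∧ A x' y'

/-- The cherry-picking operation on a standard cherry `(x, y)`: remove `y` and
its incident arc, and suppress the possible resulting subdivision vertex. -/
def StandardPickAt (s : Set U) (A : U → U → Prop) (x y : U)
    (s' : Set U) (A' : U → U → Prop) : Prop :=
  StandardCherry s A x y ∧
    ∃ w, A w x ∧ A w y ∧
      SuppressIf (s \ {y}) (fun a b => A a b ∧ a ≠ y ∧ b ≠ y) w s' A'

/-- The cherry-picking operation on a reticulated cherry `(x, y)` with
in-neighbors `x', y'`: remove the arc `(x', y')` and suppress the possible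
resulting subdivision vertices. -/
def ReticPickAt (s : Set U) (A : U → U → Prop) (x y : U)
    (s' : Set U) (A' : U → U → Prop) : Prop :=
  ReticCherry s A x y ∧
    ∃ x' y', A x' x ∧ A y' y ∧ Retic s A y' ∧ A x' y' ∧
      ∃ s₁ A₁, SuppressIf s (fun a b => A a b ∧ ¬(a = x' ∧ b = y')) x' s₁ A₁ ∧
        SuppressIf s₁ A₁ y' s' A'

/-- One cherry-picking operation, on some cherry. -/
def CherryStep (N N' : Set U × (U → U → Prop)) : Prop :=
  ∃ x y, StandardPickAt N.1 N.2 x y N'.1 N'.2 ∨ ReticPickAt N.1 N.2 x y N'.1 N'.2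

/-- Reachability in the underlying undirected graph (being in the same
connected component). -/
def UReach (A : U → U → Prop) : U → U → Prop :=
  Relation.ReflTransGen fun a b => A a b ∨ A b a

/-- `(s, A)` is reduced: each connected component contains exactly one arc,
whose endpoints are a root and a leaf. -/
def Reduced (s : Set U) (A : U → U → Prop) : Prop :=
  ∀ v ∈ s, (∃! e : U × U, A e.1 e.2 ∧ UReach A v e.1) ∧
    ∀ a b, A a b → UReach A v a → (∀ w, ¬ A w a) ∧ ∀ w, ¬ A b w

/-- `(s, A)` is reducible: some sequence of cherry-picking operations
transforms it into a reduced DAG. -/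
def Reducible (s : Set U) (A : U → U → Prop) : Prop :=
  ∃ N' : Set U × (U → U → Prop),
    Relation.ReflTransGen CherryStep (s, A) N' ∧ Reduced N'.1 N'.2

/-- A directed path of `(s, A)`: a nonempty list of pairwise distinct vertices
of `s`, consecutive ones joined by arcs. -/
def IsPathOn (s : Set U) (A : U → U → Prop) (p : List U) : Prop :=
  p ≠ [] ∧ p.Nodup ∧ p.Chain' A ∧ ∀ v ∈ p, v ∈ s

/-- An induced directed path of `(s, A)`: the only arcs among its vertices are
the consecutive arcs of the path. -/
def IsInducedPathOn (s : Set U) (A : U → U → Prop) (p : List U) : Prop :=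
  IsPathOn s A p ∧
    ∀ i j : Fin p.length, A (p.get i) (p.get j) → (j : ℕ) = (i : ℕ) + 1

/-- A leaf induced path partition of `(s, A)`: a collection of vertex-disjoint
induced directed paths whose vertex sets partition `s`, each path ending at a
leaf. -/
def IsLeafIPPOn (s : Set U) (A : U → U → Prop) (P : Set (List U)) : Prop :=
  (∀ p ∈ P, IsInducedPathOn s A p) ∧
  (∀ v ∈ s, ∃! p, p ∈ P ∧ v ∈ p) ∧
  ∀ p ∈ P, ∃ x, p.getLast? = some x ∧ DLeaf s A x

/-- `u` is immediately followed by `v` in `p`. -/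
def ConsIn (p : List U) (u v : U) : Prop := ∃ k : ℕ, p[k]? = some u ∧ p[k+1]? = some v

def GoodPath (s : Set U) (A : U → U → Prop) (p : List U) : Prop :=
  p ≠ [] ∧ p.Nodup ∧ p.Chain' A ∧ (∀ v ∈ p, v ∈ s) ∧
  ∀ u v, u ∈ p → v ∈ p → A u v → ConsIn p u v

lemma idx_unique {p : List U} (hnd : p.Nodup) {i j : ℕ} {u : U}
    (hi : p[i]? = some u) (hj : p[j]? = some u) : i = j := by
  rw [List.getElem?_eq_some_iff] at hi hj
  obtain ⟨hi1, hi2⟩ := hi; obtain ⟨hj1, hj2⟩ := hj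
  have h := (hnd.get_inj_iff (i := ⟨i, hi1⟩) (j := ⟨j, hj1⟩)).mp
    (by simp only [List.get_eq_getElem]; rw [hi2, hj2])
  exact congrArg Fin.val h

lemma chain'_rel {R : U → U → Prop} {p : List U} (hc : p.Chain' R) {i : ℕ} {a b : U}
    (ha : p[i]? = some a) (hb : p[i+1]? = some b) : R a b := by
  rw [List.getElem?_eq_some_iff] at ha hb
  obtain ⟨ha1, ha2⟩ := ha; obtain ⟨hb1, hb2⟩ := hb
  have h := List.isChain_iff_getElem.mp hc i (by omega)
  rwa [ha2, hb2] at h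

lemma chain'_transGen {R : U → U → Prop} {p : List U} (hc : p.Chain' R) :
    ∀ (j i : ℕ) {a b : U}, p[i]? = some a → p[j]? = some b → i < j →
      Relation.TransGen R a b := by
  intro j
  induction j with
  | zero => intro i a b _ _ h; omega
  | succ j ih =>
    intro i a b ha hb hij
    rcases eq_or_lt_of_le (Nat.lt_succ_iff.mp hij) with h | h
    · subst h; exact .single (chain'_rel hc ha hb)
    · have hj : j < p.length := by
        have := (List.getElem?_eq_some_iff.mp hb).1; omega
      have hjc : p[j]? = some p[j] := List.getElem?_eq_some_iff.mpr ⟨hj, rfl⟩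
      exact (ih i ha hjc h).tail (chain'_rel hc hjc hb)

lemma chain'_convert {R S : U → U → Prop} :
    ∀ {p : List U}, p.Chain' R → (∀ a b, R a b → b ∈ p.tail → S a b) → p.Chain' S := by
  intro p
  induction p with
  | nil => intro _ _; exact List.isChain_nil
  | cons x l ih =>
    intro hc h
    unfold List.Chain' at hc ⊢
    rw [List.isChain_cons] at hc ⊢
    refine ⟨fun y hy => h x y (hc.1 y hy) (by simpa using List.mem_of_mem_head? hy),
      ih hc.2 fun a b hr hb => h a b hr (by simpa using List.mem_of_mem_tail hb)⟩

lemma mem_of_getElem? {p : List U} {i : ℕ} {u : U} (h : p[i]? = some u) : u ∈ p := by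
  obtain ⟨h1, h2⟩ := List.getElem?_eq_some_iff.mp h
  exact h2 ▸ List.getElem_mem h1

lemma ConsIn.append_right {p q : List U} {a b : U} (h : ConsIn p a b) :
    ConsIn (p ++ q) a b := by
  obtain ⟨k, hk, hk1⟩ := h
  have h1 := (List.getElem?_eq_some_iff.mp hk).1
  have h2 := (List.getElem?_eq_some_iff.mp hk1).1
  exact ⟨k, by rw [List.getElem?_append_left h1]; exact hk,
    by rw [List.getElem?_append_left h2]; exact hk1⟩

lemma getElem?_middle {u w t : List U} {j : ℕ} {b : U} (h : w[j]? = some b) :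
    (u ++ w ++ t)[u.length + j]? = some b := by
  have hj := (List.getElem?_eq_some_iff.mp h).1
  rw [List.getElem?_append_left (by simp; omega), List.getElem?_append_right (by omega)]
  simpa using h

lemma GoodPath.infix {s : Set U} {A : U → U → Prop} {u w t : List U}
    (h : GoodPath s A (u ++ w ++ t)) (hw : w ≠ []) : GoodPath s A w := by
  obtain ⟨hne, hnd, hch, hmem, hcons⟩ := h
  refine ⟨hw, ?_, ?_, fun v hv => hmem v (by simp [hv]), ?_⟩
  · exact ((List.sublist_append_right u w).trans (List.sublist_append_left (u ++ w) t)).nodup hnd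
  · exact (List.isChain_append.mp (List.isChain_append.mp hch).1).2.1
  · intro a b ha hb hA
    obtain ⟨k, hk, hk1⟩ := hcons a b (by simp [ha]) (by simp [hb]) hA
    obtain ⟨ja, hja⟩ := List.mem_iff_getElem?.mp ha
    obtain ⟨jb, hjb⟩ := List.mem_iff_getElem?.mp hb
    have e1 : k = u.length + ja := idx_unique hnd hk (getElem?_middle hja)
    have e2 : k + 1 = u.length + jb := idx_unique hnd hk1 (getElem?_middle hjb)
    refine ⟨ja, hja, ?_⟩
    have : jb = ja + 1 := by omega
    rwa [← this]

lemma GoodPath.transfer {s : Set U} {A B : U → U → Prop} {p : List U}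
    (h : GoodPath s B p) (hBA : ∀ a b, B a b → A a b)
    (hAB : ∀ a b, a ∈ p → b ∈ p → A a b → B a b) : GoodPath s A p :=
  ⟨h.1, h.2.1, h.2.2.1.imp hBA, h.2.2.2.1,
    fun u v hu hv ha => h.2.2.2.2 u v hu hv (hAB u v hu hv ha)⟩

lemma GoodPath.snoc {s : Set U} {A : U → U → Prop} {p : List U} {u x : U}
    (h : GoodPath s A p) (hlast : p.getLast? = some u)
    (hux : A u x) (hxp : x ∉ p) (hxs : x ∈ s) (hin : ∀ a, a ∈ p → A a x → a = u)
    (hout : ∀ b, ¬ A x b) : GoodPath s A (p ++ [x]) := by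
  obtain ⟨hne, hnd, hch, hmem, hcons⟩ := h
  have hlen : 1 ≤ p.length := List.length_pos_iff.mpr hne
  have hulast : p[p.length - 1]? = some u := by rw [← List.getLast?_eq_getElem?]; exact hlast
  refine ⟨by simp, ?_, ?_, ?_, ?_⟩
  · rw [List.nodup_append]; exact ⟨hnd, List.nodup_singleton x,
      fun a ha b hb hab => hxp (by simp at hb; subst hb; subst hab; exact ha)⟩
  · unfold List.Chain'
    rw [List.isChain_append]
    refine ⟨hch, List.isChain_singleton x, fun a ha y hy => ?_⟩
    simp only [List.head?_cons, Option.mem_def, Option.some.injEq] at hy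
    rw [Option.mem_def, hlast, Option.some.injEq] at ha
    rw [← hy, ← ha]; exact hux
  · intro v hv
    rcases List.mem_append.mp hv with h' | h'
    · exact hmem v h'
    · simpa using (by simpa using h' : v = x) ▸ hxs
  · intro a b ha hb hA
    rcases List.mem_append.mp hb with hb' | hb'
    · rcases List.mem_append.mp ha with ha' | ha'
      · exact (hcons a b ha' hb' hA).append_right
      · have hax : a = x := by simpa using ha'
        rw [hax] at hA
        exact absurd hA (hout b)
    · have hbx : b = x := by simpa using hb'
      have hax : a ∈ p := by
        rcases List.mem_append.mp ha with h' | h'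
        · exact h'
        · have h2 : a = x := by simpa using h'
          rw [h2, hbx] at hA
          exact absurd hA (hout x)
      have hau : a = u := hin a hax (by rw [← hbx]; exact hA)
      refine ⟨p.length - 1, ?_, ?_⟩
      · rw [List.getElem?_append_left (by omega), hau]; exact hulast
      · have hl : p.length - 1 + 1 = p.length := by omega
        rw [hl, List.getElem?_concat_length, hbx]

lemma goodPath_iff {s : Set U} {A : U → U → Prop} {p : List U} :
    GoodPath s A p ↔ IsInducedPathOn s A p := by
  constructor
  · rintro ⟨hne, hnd, hch, hmem, hcons⟩
    refine ⟨⟨hne, hnd, hch, hmem⟩, fun i j hA => ?_⟩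
    obtain ⟨k, hk, hk1⟩ := hcons _ _ (p.get_mem i) (p.get_mem j) hA
    have hi : p[(i : ℕ)]? = some (p.get i) := List.getElem?_eq_some_iff.mpr ⟨i.isLt, by simp⟩
    have hj : p[(j : ℕ)]? = some (p.get j) := List.getElem?_eq_some_iff.mpr ⟨j.isLt, by simp⟩
    have e1 := idx_unique hnd hk hi
    have e2 := idx_unique hnd hk1 hj
    omega
  · rintro ⟨⟨hne, hnd, hch, hmem⟩, hind⟩
    refine ⟨hne, hnd, hch, hmem, fun u v hu hv hA => ?_⟩
    obtain ⟨i, hi⟩ := List.mem_iff_get.mp hu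
    obtain ⟨j, hj⟩ := List.mem_iff_get.mp hv
    have := hind i j (by rw [hi, hj]; exact hA)
    refine ⟨i, List.getElem?_eq_some_iff.mpr ⟨i.isLt, by simp [← hi]⟩, ?_⟩
    rw [← this]
    exact List.getElem?_eq_some_iff.mpr ⟨j.isLt, by simp [← hj]⟩

lemma goodIPP_iff {s : Set U} {A : U → U → Prop} {P : Set (List U)} :
    ((∀ p ∈ P, GoodPath s A p) ∧ (∀ v ∈ s, ∃! p, p ∈ P ∧ v ∈ p) ∧
      ∀ p ∈ P, ∃ x, p.getLast? = some x ∧ DLeaf s A x) ↔ IsLeafIPPOn s A P := by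
  unfold IsLeafIPPOn
  refine and_congr_left fun _ => ?_
  exact forall₂_congr fun p _ => goodPath_iff


def GoodIPP (s : Set U) (A : U → U → Prop) (P : Set (List U)) : Prop :=
  (∀ p ∈ P, GoodPath s A p) ∧ (∀ u ∈ s, ∃! p, p ∈ P ∧ u ∈ p) ∧
  ∀ p ∈ P, ∃ c, p.getLast? = some c ∧ DLeaf s A c

lemma goodIPP_iff' {s : Set U} {A : U → U → Prop} {P : Set (List U)} :
    GoodIPP s A P ↔ IsLeafIPPOn s A P := goodIPP_iff

lemma last_mem {l : List U} {a : U} (h : l.getLast? = some a) : a ∈ l := by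
  rw [List.getLast?_eq_getElem?] at h
  exact mem_of_getElem? h

lemma unsuppress (s₀ : Set U) (A₀ : U → U → Prop) (v z o : U)
    (hzv : A₀ z v) (hvo : A₀ v o)
    (hin : ∀ a, A₀ a v → a = z)
    (hout : ∀ b, A₀ v b → b = o)
    (hoin : ∀ a, A₀ a o → a = v)
    (hacyc : ∀ u, ¬ Relation.TransGen A₀ u u)
    (hv : v ∈ s₀) (ho : o ∈ s₀)
    (hP : ∃ P, GoodIPP (s₀ \ {v})
      (fun a b => (A₀ a b ∧ a ≠ v ∧ b ≠ v) ∨ (a = z ∧ b = o)) P) :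
    ∃ P, GoodIPP s₀ A₀ P := by
  set s₁ : Set U := s₀ \ {v} with hs₁
  set A₁ : U → U → Prop := fun a b => (A₀ a b ∧ a ≠ v ∧ b ≠ v) ∨ (a = z ∧ b = o) with hA₁
  obtain ⟨P, hgood, huniq, hend⟩ := hP
  have hzv' : z ≠ v := fun h => hacyc v (.single (h ▸ hzv))
  have hov : o ≠ v := fun h => hacyc v (.single (h ▸ hvo))
  have hleaf : ∀ c, DLeaf s₁ A₁ c → DLeaf s₀ A₀ c := by
    rintro c ⟨hcs, hcout⟩
    refine ⟨hcs.1, fun w hw => ?_⟩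
    by_cases hwv : w = v
    · subst hwv
      have hcz : c = z := hin c hw
      exact hcout o (Or.inr ⟨hcz, rfl⟩)
    · exact hcout w (Or.inl ⟨hw, hcs.2, hwv⟩)
  -- the path containing o
  obtain ⟨q, ⟨hqP, hoq⟩, hqun⟩ := huniq o ⟨ho, hov⟩
  obtain ⟨hqne, hqnd, hqch, hqmem, hqcons⟩ := hgood q hqP
  have hvq : v ∉ q := fun h => (hqmem v h).2 rfl
  obtain ⟨l, rt, hq⟩ := List.append_of_mem hoq
  have hqnd' := hq ▸ hqnd
  have hol : o ∉ l := by
    rw [List.nodup_append] at hqnd'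
    exact fun h => hqnd'.2.2 o h o List.mem_cons_self rfl
  have hort : o ∉ rt := by
    rw [List.nodup_append, List.nodup_cons] at hqnd'
    exact hqnd'.2.1.1
  set n := l.length with hn
  have hqo : q[n]? = some o := by
    rw [hq, List.getElem?_append_right (le_refl n)]
    simp [hn]
  set q' : List U := l ++ v :: o :: rt with hq'
  have hidx1 : ∀ i, i < n → q'[i]? = q[i]? := by
    intro i hi
    rw [hq, hq', List.getElem?_append_left hi, List.getElem?_append_left hi]
  have hidx2 : q'[n]? = some v := by
    rw [hq', List.getElem?_append_right (le_refl n)]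
    simp [hn]
  have hidx3 : ∀ i, n ≤ i → q'[i+1]? = q[i]? := by
    intro i hi
    rw [hq, hq', List.getElem?_append_right (by omega : n ≤ i + 1),
      List.getElem?_append_right hi]
    have : i + 1 - n = (i - n) + 1 := by omega
    rw [this]
    simp [hn]
  have hperm : List.Perm q' (v :: q) := by rw [hq, hq']; exact List.perm_middle
  have hq'mem : ∀ a, a ∈ q' ↔ a = v ∨ a ∈ q := by
    intro a; rw [hperm.mem_iff]; simp
  have hq'nd : q'.Nodup := hperm.nodup_iff.mpr (List.nodup_cons.mpr ⟨hvq, hqnd⟩)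
  have hchsplit := List.isChain_append.mp (hq ▸ hqch)
  have hq'good : GoodPath s₀ A₀ q' := by
    refine ⟨by simp [hq'], hq'nd, ?_, ?_, ?_⟩
    · unfold List.Chain'
      rw [hq', List.isChain_append]
      refine ⟨?_, ?_, ?_⟩
      · refine chain'_convert hchsplit.1 fun a b hab hbl => ?_
        rcases hab with ⟨h1, _⟩ | ⟨_, h2⟩
        · exact h1
        · exact absurd (h2 ▸ List.mem_of_mem_tail hbl) hol
      · rw [List.isChain_cons]
        refine ⟨fun y hy => ?_, ?_⟩
        · simp only [List.head?_cons, Option.mem_def, Option.some.injEq] at hy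
          rw [← hy]; exact hvo
        · refine chain'_convert hchsplit.2.1 fun a b hab hbt => ?_
          rcases hab with ⟨h1, _⟩ | ⟨_, h2⟩
          · exact h1
          · simp only [List.tail_cons] at hbt
            exact absurd (h2 ▸ hbt) hort
      · intro a ha y hy
        simp only [List.head?_cons, Option.mem_def, Option.some.injEq] at hy
        have haq : a ∈ l := last_mem ha
        have h1 := hchsplit.2.2 a ha o (by simp)
        rcases h1 with ⟨h1, _⟩ | ⟨h1, _⟩
        · exact absurd (hoin a h1 ▸ haq : v ∈ l) (fun hh => hvq (hq ▸ List.mem_append_left _ hh))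
        · rw [← hy, h1]; exact hzv
    · intro a ha
      rcases (hq'mem a).mp ha with h | h
      · exact h ▸ hv
      · exact (hqmem a h).1
    · intro a b ha hb hA
      by_cases hbv : b = v
      · have hav : a ≠ v := fun h => hacyc v (.single (by rwa [h, hbv] at hA))
        have haz : a = z := hin a (by rwa [hbv] at hA)
        have hzq : z ∈ q := by
          rw [← haz]; exact ((hq'mem a).mp ha).resolve_left hav
        obtain ⟨k, hk, hk1⟩ := hqcons z o hzq hoq (Or.inr ⟨rfl, rfl⟩)
        have hkn : k + 1 = n := idx_unique hqnd hk1 hqo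
        refine ⟨k, ?_, ?_⟩
        · rw [hidx1 k (by omega), haz]; exact hk
        · rw [hkn, hbv]; exact hidx2
      · by_cases hav : a = v
        · have hbo : b = o := hout b (by rwa [hav] at hA)
          refine ⟨n, ?_, ?_⟩
          · rw [hav]; exact hidx2
          · rw [hbo, hidx3 n (le_refl n)]; exact hqo
        · have haq : a ∈ q := ((hq'mem a).mp ha).resolve_left hav
          have hbq : b ∈ q := ((hq'mem b).mp hb).resolve_left hbv
          have hbo : b ≠ o := fun h => hav (hoin a (h ▸ hA))
          obtain ⟨k, hk, hk1⟩ := hqcons a b haq hbq (Or.inl ⟨hA, hav, hbv⟩)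
          have hkn : k + 1 ≠ n := by
            intro h
            rw [h, hqo] at hk1
            exact hbo (by injection hk1.symm)
          rcases lt_or_gt_of_ne hkn with h | h
          · exact ⟨k, by rw [hidx1 k (by omega)]; exact hk,
              by rw [hidx1 (k+1) (by omega)]; exact hk1⟩
          · exact ⟨k+1, by rw [hidx3 k (by omega)]; exact hk,
              by rw [hidx3 (k+1) (by omega)]; exact hk1⟩
  have hq'last : q'.getLast? = q.getLast? := by
    rw [hq, hq', List.getLast?_append, List.getLast?_append]
    have : (v :: o :: rt).getLast? = (o :: rt).getLast? := by
      rw [List.getLast?_cons_cons]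
    rw [this]
  have hother : ∀ p ∈ P, p ≠ q → GoodPath s₀ A₀ p := by
    intro p hpP hpq
    obtain ⟨hne, hnd, hch, hmem, hcons⟩ := hgood p hpP
    have hop : o ∉ p := fun h => hpq (hqun p ⟨hpP, h⟩)
    refine ⟨hne, hnd, ?_, fun a ha => (hmem a ha).1, ?_⟩
    · refine chain'_convert hch fun a b hab hbt => ?_
      rcases hab with ⟨h1, _⟩ | ⟨_, h2⟩
      · exact h1
      · exact absurd (h2 ▸ List.mem_of_mem_tail hbt) hop
    · intro a b ha hb hA
      have hbo : b ≠ o := fun h => hop (h ▸ hb)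
      exact hcons a b ha hb (Or.inl ⟨hA, (hmem a ha).2, (hmem b hb).2⟩)
  refine ⟨insert q' (P \ {q}), ?_, ?_, ?_⟩
  · intro p hp
    rcases Set.mem_insert_iff.mp hp with h | h
    · exact h ▸ hq'good
    · exact hother p h.1 h.2
  · intro u hu
    by_cases huv : u = v
    · subst huv
      refine ⟨q', ⟨Set.mem_insert _ _, (hq'mem u).mpr (Or.inl rfl)⟩, ?_⟩
      rintro p ⟨hp, hup⟩
      rcases Set.mem_insert_iff.mp hp with h | h
      · exact h
      · exact absurd ((hgood p h.1).2.2.2.1 u hup).2 (fun hh => hh rfl)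
    · obtain ⟨pu, ⟨hpuP, hupu⟩, hpuun⟩ := huniq u ⟨hu, huv⟩
      by_cases hpq : pu = q
      · refine ⟨q', ⟨Set.mem_insert _ _, (hq'mem u).mpr (Or.inr (hpq ▸ hupu))⟩, ?_⟩
        rintro p ⟨hp, hup⟩
        rcases Set.mem_insert_iff.mp hp with h | h
        · exact h
        · exact absurd (hpuun p ⟨h.1, hup⟩) (by rw [hpq]; exact h.2)
      · refine ⟨pu, ⟨Set.mem_insert_of_mem _ ⟨hpuP, hpq⟩, hupu⟩, ?_⟩
        rintro p ⟨hp, hup⟩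
        rcases Set.mem_insert_iff.mp hp with h | h
        · subst h
          rcases (hq'mem u).mp hup with h' | h'
          · exact absurd h' huv
          · exact absurd (hpuun q ⟨hqP, h'⟩).symm hpq
        · exact hpuun p ⟨h.1, hup⟩
  · intro p hp
    rcases Set.mem_insert_iff.mp hp with h | h
    · obtain ⟨c, hc, hcl⟩ := hend q hqP
      exact ⟨c, h ▸ (hq'last ▸ hc), hleaf c hcl⟩
    · obtain ⟨c, hc, hcl⟩ := hend p h.1
      exact ⟨c, hc, hleaf c hcl⟩


lemma unpick (s : Set U) (A : U → U → Prop) (x y x' y' : U)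
    (hacyc : ∀ u, ¬ Relation.TransGen A u u)
    (harc : ∀ u v, A u v → u ∈ s ∧ v ∈ s)
    (hlx : DLeaf s A x) (hly : DLeaf s A y)
    (hxx : A x' x) (hyy : A y' y) (hxy : A x' y')
    (hxin : ∀ a, A a x → a = x')
    (hyin : ∀ a, A a y → a = y')
    (hxyne : x ≠ y)
    (hP : ∃ P, GoodIPP s (fun a b => A a b ∧ ¬(a = x' ∧ b = y')) P) :
    ∃ P, GoodIPP s A P := by
  set B : U → U → Prop := fun a b => A a b ∧ ¬(a = x' ∧ b = y') with hB
  obtain ⟨P, hgood, huniq, hend⟩ := hP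
  have hBA : ∀ a b, B a b → A a b := fun a b h => h.1
  have hxny' : x ≠ y' := fun h => hlx.2 y (by rw [h]; exact hyy)
  have hyny' : y ≠ y' := fun h => hly.2 y (by rw [← h] at hyy; exact hyy)
  have hynx' : y ≠ x' := fun h => hly.2 y' (by rw [h]; exact hxy)
  have hx'y' : x' ≠ y' := fun h => hacyc y' (.single (h ▸ hxy))
  have hBxx : B x' x := ⟨hxx, fun hh => hxny' hh.2⟩
  have hByy : B y' y := ⟨hyy, fun hh => hx'y' hh.1.symm⟩
  have hleafBA : ∀ c, DLeaf s B c → DLeaf s A c := by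
    rintro c ⟨h1, h2⟩
    refine ⟨h1, fun w hw => ?_⟩
    by_cases hc : c = x' ∧ w = y'
    · exact h2 x (by rw [hc.1]; exact hBxx)
    · exact h2 w ⟨hw, hc⟩
  -- the path containing y'
  obtain ⟨q, ⟨hqP, hy'q⟩, hqun⟩ := huniq y' (harc _ _ hyy).1
  have hqgood := hgood q hqP
  obtain ⟨hqne, hqnd, hqch, hqmem, hqcons⟩ := hqgood
  have htrans : ∀ p ∈ P, (x' ∉ p ∨ y' ∉ p) → GoodPath s A p := by
    intro p hp hcond
    refine (hgood p hp).transfer hBA (fun a b ha hb hab => ⟨hab, ?_⟩)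
    rintro ⟨h1, h2⟩
    rcases hcond with h | h
    · exact h (h1 ▸ ha)
    · exact h (h2 ▸ hb)
  by_cases hx'q : x' ∈ q
  swap
  · -- x' not on the path of y' : P itself works
    refine ⟨P, fun p hp => ?_, huniq, fun p hp => ?_⟩
    · by_cases hyp : y' ∈ p
      · exact htrans p hp (Or.inl (by rw [hqun p ⟨hp, hyp⟩]; exact hx'q))
      · exact htrans p hp (Or.inr hyp)
    · obtain ⟨c, hc, hcl⟩ := hend p hp
      exact ⟨c, hc, hleafBA c hcl⟩
  -- x' is on the path of y'
  obtain ⟨l0, t₀, hqd0⟩ := List.append_of_mem hy'q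
  have hqnd0 := hqd0 ▸ hqnd
  have hy'l0 : y' ∉ l0 := by
    rw [List.nodup_append] at hqnd0
    exact fun h => hqnd0.2.2 y' h y' List.mem_cons_self rfl
  have hy't0 : y' ∉ t₀ := by
    rw [List.nodup_append, List.nodup_cons] at hqnd0
    exact hqnd0.2.1.1
  have hx'l0 : x' ∈ l0 := by
    rcases List.mem_append.mp (hqd0 ▸ hx'q) with h | h
    · exact h
    · rcases List.mem_cons.mp h with h' | h'
      · exact absurd h' hx'y'
      · -- x' strictly after y' on q : contradiction with acyclicity
        exfalso
        obtain ⟨j, hj⟩ := List.mem_iff_getElem?.mp h'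
        have hy'idx : q[l0.length]? = some y' := by
          rw [hqd0, List.getElem?_append_right (le_refl _)]
          simp
        have hx'idx : q[l0.length + 1 + j]? = some x' := by
          rw [hqd0, List.getElem?_append_right (by omega : l0.length ≤ l0.length + 1 + j)]
          have : l0.length + 1 + j - l0.length = j + 1 := by omega
          rw [this]
          simpa using hj
        have hT : Relation.TransGen B y' x' :=
          chain'_transGen hqch _ _ hy'idx hx'idx (by omega)
        exact hacyc x' ((Relation.TransGen.mono hBA _ _ hT).head hxy)
  obtain ⟨r, m, hl0⟩ := List.append_of_mem hx'l0
  set pfx : List U := r ++ [x'] with hpfx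
  set mid : List U := m ++ [y'] with hmid
  have hqsh : q = pfx ++ mid ++ t₀ := by rw [hqd0, hl0, hpfx, hmid]; simp
  set nr := r.length
  set nm := m.length
  set nt := t₀.length
  have hpfxlen : pfx.length = nr + 1 := by simp [hpfx, nr]
  have hmidlen : mid.length = nm + 1 := by simp [hmid, nm]
  have hlen : q.length = nr + 1 + (nm + 1) + nt := by
    rw [hqsh]; simp [hpfx, hmid]; omega
  have hqx' : q[nr]? = some x' := by
    rw [hqsh, List.getElem?_append_left (by rw [List.length_append, hpfxlen]; omega),
      List.getElem?_append_left (by omega), hpfx]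
    exact List.getElem?_concat_length
  have hqy' : q[nr + 1 + nm]? = some y' := by
    rw [hqsh, List.getElem?_append_left (by rw [List.length_append, hpfxlen, hmidlen]; omega),
      List.getElem?_append_right (by omega)]
    have : nr + 1 + nm - pfx.length = nm := by omega
    rw [this, hmid]
    exact List.getElem?_concat_length
  have hqt : ∀ j, q[nr + 1 + nm + 1 + j]? = t₀[j]? := by
    intro j
    rw [hqsh, List.getElem?_append_right (by rw [List.length_append, hpfxlen, hmidlen]; omega)]
    have : nr + 1 + nm + 1 + j - (pfx ++ mid).length = j := by
      rw [List.length_append, hpfxlen, hmidlen]; omega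
    rw [this]
  have hmne : m ≠ [] := by
    intro h
    have h0 : nm = 0 := by simp [nm, h]
    have : q[nr + 1]? = some y' := by rw [(by omega : nr + 1 = nr + 1 + nm)]; exact hqy'
    exact (chain'_rel hqch hqx' this).2 ⟨rfl, rfl⟩
  have hnm1 : 1 ≤ nm := by
    rcases Nat.eq_zero_or_pos nm with h | h
    · exact absurd (List.length_eq_zero_iff.mp h) hmne
    · exact h
  have htne : t₀ ≠ [] := by
    intro h
    obtain ⟨c, hc, hcl⟩ := hend q hqP
    have : q.getLast? = some y' := by
      rw [hqd0, h, List.getLast?_append]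
      simp
    rw [this] at hc
    exact (hleafBA c hcl).2 y (by rw [← (Option.some_injective _ hc)]; exact hyy)
  have hnt1 : 1 ≤ nt := by
    rcases Nat.eq_zero_or_pos nt with h | h
    · exact absurd (List.length_eq_zero_iff.mp h) htne
    · exact h
  -- x is not on q
  have hxq : x ∉ q := by
    intro hx_in
    obtain ⟨i, hix⟩ := List.mem_iff_getElem?.mp hx_in
    have hil : i < q.length := (List.getElem?_eq_some_iff.mp hix).1
    have hlast : i + 1 = q.length := by
      by_contra h
      have h1 : i + 1 < q.length := by omega
      exact hlx.2 _ (chain'_rel hqch hix (List.getElem?_eq_some_iff.mpr ⟨h1, rfl⟩)).1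
    have hige : 1 ≤ i := by omega
    have hpred : q[i-1]? = some q[i-1] := List.getElem?_eq_some_iff.mpr ⟨by omega, rfl⟩
    have hBx : B q[i-1] x := chain'_rel hqch hpred (by rw [(by omega : i-1+1 = i)]; exact hix)
    have hpx' : q[i-1]? = some x' := by rw [hpred]; exact congrArg some (hxin _ hBx.1)
    have := idx_unique hqnd hpx' hqx'
    omega
  -- the path containing x is the singleton [x]
  have hsingleton : ∀ (c d : U) (pc : List U), DLeaf s A c → pc ∈ P → c ∈ pc →
      (∀ a, A a c → a = d) → d ∈ q → c ∉ q → pc = [c] := by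
    intro c d pc hcl hpcP hcpc hcin hdq hcq
    obtain ⟨hne, hnd, hch, hmem, hcons⟩ := hgood pc hpcP
    obtain ⟨i, hic⟩ := List.mem_iff_getElem?.mp hcpc
    have hil : i < pc.length := (List.getElem?_eq_some_iff.mp hic).1
    have hlast : i + 1 = pc.length := by
      by_contra h
      have h1 : i + 1 < pc.length := by omega
      exact hcl.2 _ (chain'_rel hch hic (List.getElem?_eq_some_iff.mpr ⟨h1, rfl⟩)).1
    have hlen1 : pc.length = 1 := by
      by_contra h
      have h2 : 1 ≤ i := by omega
      have hpred : pc[i-1]? = some pc[i-1] := List.getElem?_eq_some_iff.mpr ⟨by omega, rfl⟩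
      have hBc : B pc[i-1] c :=
        chain'_rel hch hpred (by rw [(by omega : i-1+1 = i)]; exact hic)
      have hdp : d ∈ pc := by rw [← hcin _ hBc.1]; exact mem_of_getElem? hpred
      obtain ⟨pd, _, hpdun⟩ := huniq d (hqmem d hdq)
      have e1 : pc = pd := hpdun pc ⟨hpcP, hdp⟩
      have e2 : q = pd := hpdun q ⟨hqP, hdq⟩
      rw [e1, ← e2] at hcpc
      exact hcq hcpc
    obtain ⟨a, ha⟩ := List.length_eq_one_iff.mp hlen1
    rw [ha] at hcpc ⊢
    simp only [List.mem_singleton] at hcpc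
    rw [hcpc]
  obtain ⟨px, ⟨hpxP, hxpx⟩, hpxun⟩ := huniq x hlx.1
  have hpxeq : px = [x] := hsingleton x x' px hlx hpxP hxpx hxin hx'q hxq
  have hxonly : ∀ p ∈ P, x ∈ p → p = [x] := fun p hp hxp => by
    rw [← hpxeq]; exact hpxun p ⟨hp, hxp⟩
  -- disjointness of the three pieces of q
  have hndsh := hqsh ▸ hqnd
  have hd12 : ∀ u, u ∈ pfx → u ∈ mid → False := by
    intro u h1 h2
    rw [List.nodup_append] at hndsh
    exact (List.nodup_append.mp hndsh.1).2.2 u h1 u h2 rfl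
  have hd13 : ∀ u, u ∈ pfx → u ∈ t₀ → False := by
    intro u h1 h2
    rw [List.nodup_append] at hndsh
    exact hndsh.2.2 u (List.mem_append_left _ h1) u h2 rfl
  have hd23 : ∀ u, u ∈ mid → u ∈ t₀ → False := by
    intro u h1 h2
    rw [List.nodup_append] at hndsh
    exact hndsh.2.2 u (List.mem_append_right _ h1) u h2 rfl
  have hqcover : ∀ u, u ∈ q ↔ u ∈ pfx ∨ u ∈ mid ∨ u ∈ t₀ := by
    intro u; rw [hqsh]; simp [or_assoc]
  have hy'mid : y' ∈ mid := by rw [hmid]; simp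
  have hx'pfx : x' ∈ pfx := by rw [hpfx]; simp
  have hx'mid : x' ∉ mid := fun h => hd12 x' hx'pfx h
  have hx't : x' ∉ t₀ := fun h => hd13 x' hx'pfx h
  have hy'pfx : y' ∉ pfx := fun h => hd12 y' h hy'mid
  -- first new path : pfx ++ [x]
  have hqgood' : GoodPath s B q := ⟨hqne, hqnd, hqch, hqmem, hqcons⟩
  have hpfxB : GoodPath s B pfx := by
    refine GoodPath.infix (u := []) (t := mid ++ t₀) ?_ (by simp [hpfx])
    have he : [] ++ pfx ++ (mid ++ t₀) = q := by rw [hqsh]; simp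
    rw [he]; exact hqgood'
  have hpfxA : GoodPath s A pfx :=
    hpfxB.transfer hBA (fun a b ha hb hab => ⟨hab, fun hh => hy'pfx (hh.2 ▸ hb)⟩)
  have hxpfx : x ∉ pfx := fun h => hxq ((hqcover x).mpr (Or.inl h))
  have hpfxlast : pfx.getLast? = some x' := by rw [hpfx]; simp [List.getLast?_append]
  set q1 : List U := pfx ++ [x] with hq1
  have hq1good : GoodPath s A q1 :=
    hpfxA.snoc hpfxlast hxx hxpfx hlx.1 (fun a _ hax => hxin a hax) hlx.2
  have hq1last : q1.getLast? = some x := by rw [hq1]; simp [List.getLast?_append]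
  have hq1mem : ∀ u, u ∈ q1 ↔ u ∈ pfx ∨ u = x := by intro u; rw [hq1]; simp
  -- second new path : mid ++ [y]
  have hmidB : GoodPath s B mid := by
    refine GoodPath.infix (u := pfx) (t := t₀) ?_ (by simp [hmid])
    rw [← hqsh]
    exact hqgood'
  have hmidA : GoodPath s A mid :=
    hmidB.transfer hBA (fun a b ha hb hab => ⟨hab, fun hh => hx'mid (hh.1 ▸ ha)⟩)
  have hmidlast : mid.getLast? = some y' := by rw [hmid]; simp [List.getLast?_append]
  set q2 : List U := mid ++ [y] with hq2
  have hq2mem : ∀ u, u ∈ q2 ↔ u ∈ mid ∨ u = y := by intro u; rw [hq2]; simp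
  have hq2last : q2.getLast? = some y := by rw [hq2]; simp [List.getLast?_append]
  -- other old paths survive
  have hothergood : ∀ p ∈ P, p ≠ q → GoodPath s A p := by
    intro p hp hpq
    exact htrans p hp (Or.inr fun h => hpq (hqun p ⟨hp, h⟩))
  by_cases hyq : y ∈ q
  · -- y is on q ; then t₀ = [y]
    have ht0y : t₀ = [y] := by
      obtain ⟨i, hiy⟩ := List.mem_iff_getElem?.mp hyq
      have hil : i < q.length := (List.getElem?_eq_some_iff.mp hiy).1
      have hlasti : i + 1 = q.length := by
        by_contra h
        have h1 : i + 1 < q.length := by omega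
        exact hly.2 _ (chain'_rel hqch hiy (List.getElem?_eq_some_iff.mpr ⟨h1, rfl⟩)).1
      have hige : 1 ≤ i := by omega
      have hpred : q[i-1]? = some q[i-1] := List.getElem?_eq_some_iff.mpr ⟨by omega, rfl⟩
      have hBy : B q[i-1] y :=
        chain'_rel hqch hpred (by rw [(by omega : i-1+1 = i)]; exact hiy)
      have hpy' : q[i-1]? = some y' := by rw [hpred]; exact congrArg some (hyin _ hBy.1)
      have hi1 := idx_unique hqnd hpy' hqy'
      have hnt : nt = 1 := by omega
      obtain ⟨c, hc⟩ := List.length_eq_one_iff.mp hnt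
      have : q[nr + 1 + nm + 1]? = some c := by rw [hqt 0]; simp [hc]
      have hcy : c = y := by
        have hieq : i = nr + 1 + nm + 1 := by omega
        rw [hieq] at hiy
        rw [this] at hiy
        exact (Option.some_injective _ hiy)
      rw [hc, hcy]
    have hymid : y ∉ mid := fun h => hd23 y h (by rw [ht0y]; simp)
    have hq2good : GoodPath s A q2 :=
      hmidA.snoc hmidlast hyy hymid hly.1 (fun a _ hay => hyin a hay) hly.2
    have hq2subq : ∀ u, u ∈ q2 → u ∈ q := by
      intro u hu
      rcases (hq2mem u).mp hu with h | h
      · exact (hqcover u).mpr (Or.inr (Or.inl h))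
      · exact h ▸ hyq
    refine ⟨insert q1 (insert q2 ((P \ {q}) \ {[x]})), ?_, ?_, ?_⟩
    · intro p hp
      rcases Set.mem_insert_iff.mp hp with h | h
      · exact h ▸ hq1good
      rcases Set.mem_insert_iff.mp h with h' | h'
      · exact h' ▸ hq2good
      · exact hothergood p h'.1.1 h'.1.2
    · intro u hu
      by_cases hux : u = x
      · refine ⟨q1, ⟨Set.mem_insert _ _, (hq1mem u).mpr (Or.inr hux)⟩, ?_⟩
        rintro p ⟨hp, hup⟩
        rcases Set.mem_insert_iff.mp hp with h | h
        · exact h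
        rcases Set.mem_insert_iff.mp h with h' | h'
        · exact absurd (hq2subq u (h' ▸ hup)) (hux ▸ hxq)
        · exact absurd (hux ▸ hxonly p h'.1.1 (hux ▸ hup) : p = [x]) h'.2
      by_cases huq : u ∈ q
      · obtain ⟨pu0, hpu0, hpu0un⟩ := huniq u hu
        rcases (hqcover u).mp huq with h | h
        · -- u ∈ pfx : belongs to q1
          refine ⟨q1, ⟨Set.mem_insert _ _, (hq1mem u).mpr (Or.inl h)⟩, ?_⟩
          rintro p ⟨hp, hup⟩
          rcases Set.mem_insert_iff.mp hp with h1 | h1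
          · exact h1
          rcases Set.mem_insert_iff.mp h1 with h2 | h2
          · subst h2
            rcases (hq2mem u).mp hup with h3 | h3
            · exact absurd h3 (fun hh => hd12 u h hh)
            · exact absurd (show u ∈ t₀ by rw [h3, ht0y]; simp) (fun hh => hd13 u h hh)
          · exact absurd ((hpu0un p ⟨h2.1.1, hup⟩).trans (hpu0un q ⟨hqP, huq⟩).symm) h2.1.2
        · -- u ∈ mid ∨ u ∈ t₀ : belongs to q2
          have huq2 : u ∈ q2 := by
            rcases h with h | h
            · exact (hq2mem u).mpr (Or.inl h)
            · rw [ht0y] at h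
              simp only [List.mem_singleton] at h
              exact (hq2mem u).mpr (Or.inr h)
          refine ⟨q2, ⟨Set.mem_insert_of_mem _ (Set.mem_insert _ _), huq2⟩, ?_⟩
          rintro p ⟨hp, hup⟩
          rcases Set.mem_insert_iff.mp hp with h1 | h1
          · subst h1
            rcases (hq1mem u).mp hup with h3 | h3
            · exfalso
              rcases h with h | h
              · exact hd12 u h3 h
              · exact hd13 u h3 h
            · exact absurd h3 hux
          rcases Set.mem_insert_iff.mp h1 with h2 | h2
          · exact h2
          · exact absurd ((hpu0un p ⟨h2.1.1, hup⟩).trans (hpu0un q ⟨hqP, huq⟩).symm) h2.1.2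
      · -- u outside q and u ≠ x : keep the old path
        obtain ⟨pu, ⟨hpuP, hupu⟩, hpuun⟩ := huniq u hu
        have hpuq : pu ≠ q := fun h => huq (h ▸ hupu)
        have hpux : pu ≠ [x] := fun h => hux (by rw [h] at hupu; simpa using hupu)
        refine ⟨pu, ⟨Set.mem_insert_of_mem _ (Set.mem_insert_of_mem _ ⟨⟨hpuP, hpuq⟩, hpux⟩),
          hupu⟩, ?_⟩
        rintro p ⟨hp, hup⟩
        rcases Set.mem_insert_iff.mp hp with h1 | h1
        · subst h1
          rcases (hq1mem u).mp hup with h3 | h3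
          · exact absurd ((hqcover u).mpr (Or.inl h3)) huq
          · exact absurd h3 hux
        rcases Set.mem_insert_iff.mp h1 with h2 | h2
        · subst h2
          exact absurd (hq2subq u hup) huq
        · exact hpuun p ⟨h2.1.1, hup⟩
    · intro p hp
      rcases Set.mem_insert_iff.mp hp with h | h
      · exact ⟨x, h ▸ hq1last, hlx⟩
      rcases Set.mem_insert_iff.mp h with h' | h'
      · exact ⟨y, h' ▸ hq2last, hly⟩
      · obtain ⟨c, hc, hcl⟩ := hend p h'.1.1
        exact ⟨c, hc, hleafBA c hcl⟩
  · -- y is not on q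
    obtain ⟨py, ⟨hpyP, hypy⟩, hpyun⟩ := huniq y hly.1
    have hpyeq : py = [y] := hsingleton y y' py hly hpyP hypy hyin hy'q hyq
    have hyonly : ∀ p ∈ P, y ∈ p → p = [y] := fun p hp hyp => by
      rw [← hpyeq]; exact hpyun p ⟨hp, hyp⟩
    have hymid : y ∉ mid := fun h => hyq ((hqcover y).mpr (Or.inr (Or.inl h)))
    have hq2good : GoodPath s A q2 :=
      hmidA.snoc hmidlast hyy hymid hly.1 (fun a _ hay => hyin a hay) hly.2
    have hq3good : GoodPath s A t₀ := by
      have hB3 : GoodPath s B t₀ := by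
        refine GoodPath.infix (u := pfx ++ mid) (t := []) ?_ htne
        have he : pfx ++ mid ++ t₀ ++ [] = q := by rw [hqsh]; simp
        rw [he]; exact hqgood'
      exact hB3.transfer hBA (fun a b ha hb hab => ⟨hab, fun hh => hx't (hh.1 ▸ ha)⟩)
    have hq3last : t₀.getLast? = q.getLast? := by
      rw [hqsh, List.getLast?_append]
      obtain ⟨c, hc⟩ := Option.isSome_iff_exists.mp (List.getLast?_isSome.mpr htne)
      rw [hc]; simp
    have hq3end : ∃ c, t₀.getLast? = some c ∧ DLeaf s A c := by
      obtain ⟨c, hc, hcl⟩ := hend q hqP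
      exact ⟨c, by rw [hq3last]; exact hc, hleafBA c hcl⟩
    refine ⟨insert q1 (insert q2 (insert t₀ (((P \ {q}) \ {[x]}) \ {[y]}))), ?_, ?_, ?_⟩
    · intro p hp
      rcases Set.mem_insert_iff.mp hp with h | h
      · exact h ▸ hq1good
      rcases Set.mem_insert_iff.mp h with h' | h'
      · exact h' ▸ hq2good
      rcases Set.mem_insert_iff.mp h' with h'' | h''
      · exact h'' ▸ hq3good
      · exact hothergood p h''.1.1.1 h''.1.1.2
    · intro u hu
      by_cases hux : u = x
      · refine ⟨q1, ⟨Set.mem_insert _ _, (hq1mem u).mpr (Or.inr hux)⟩, ?_⟩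
        rintro p ⟨hp, hup⟩
        rcases Set.mem_insert_iff.mp hp with h | h
        · exact h
        rcases Set.mem_insert_iff.mp h with h' | h'
        · subst h'
          rcases (hq2mem u).mp hup with h3 | h3
          · exact absurd ((hqcover u).mpr (Or.inr (Or.inl h3))) (hux ▸ hxq)
          · exact absurd (hux ▸ h3 : x = y) hxyne
        rcases Set.mem_insert_iff.mp h' with h'' | h''
        · exact absurd ((hqcover u).mpr (Or.inr (Or.inr (h'' ▸ hup)))) (hux ▸ hxq)
        · exact absurd (hux ▸ hxonly p h''.1.1.1 (hux ▸ hup) : p = [x]) h''.1.2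
      by_cases huy : u = y
      · refine ⟨q2, ⟨Set.mem_insert_of_mem _ (Set.mem_insert _ _),
          (hq2mem u).mpr (Or.inr huy)⟩, ?_⟩
        rintro p ⟨hp, hup⟩
        rcases Set.mem_insert_iff.mp hp with h | h
        · subst h
          rcases (hq1mem u).mp hup with h3 | h3
          · exact absurd ((hqcover u).mpr (Or.inl h3)) (huy ▸ hyq)
          · exact absurd (huy ▸ h3 : y = x) hxyne.symm
        rcases Set.mem_insert_iff.mp h with h' | h'
        · exact h'
        rcases Set.mem_insert_iff.mp h' with h'' | h''
        · exact absurd ((hqcover u).mpr (Or.inr (Or.inr (h'' ▸ hup)))) (huy ▸ hyq)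
        · exact absurd (huy ▸ hyonly p h''.1.1.1 (huy ▸ hup) : p = [y]) h''.2
      by_cases huq : u ∈ q
      · obtain ⟨pu0, hpu0, hpu0un⟩ := huniq u hu
        rcases (hqcover u).mp huq with h | h
        · refine ⟨q1, ⟨Set.mem_insert _ _, (hq1mem u).mpr (Or.inl h)⟩, ?_⟩
          rintro p ⟨hp, hup⟩
          rcases Set.mem_insert_iff.mp hp with h1 | h1
          · exact h1
          rcases Set.mem_insert_iff.mp h1 with h2 | h2
          · subst h2
            rcases (hq2mem u).mp hup with h3 | h3
            · exact absurd h3 (fun hh => hd12 u h hh)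
            · exact absurd h3 huy
          rcases Set.mem_insert_iff.mp h2 with h4 | h4
          · exact absurd (h4 ▸ hup) (fun hh => hd13 u h hh)
          · exact absurd ((hpu0un p ⟨h4.1.1.1, hup⟩).trans (hpu0un q ⟨hqP, huq⟩).symm) h4.1.1.2
        rcases h with h | h
        · refine ⟨q2, ⟨Set.mem_insert_of_mem _ (Set.mem_insert _ _),
            (hq2mem u).mpr (Or.inl h)⟩, ?_⟩
          rintro p ⟨hp, hup⟩
          rcases Set.mem_insert_iff.mp hp with h1 | h1
          · subst h1
            rcases (hq1mem u).mp hup with h3 | h3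
            · exact absurd h3 (fun hh => hd12 u hh h)
            · exact absurd h3 hux
          rcases Set.mem_insert_iff.mp h1 with h2 | h2
          · exact h2
          rcases Set.mem_insert_iff.mp h2 with h4 | h4
          · exact absurd (h4 ▸ hup) (fun hh => hd23 u h hh)
          · exact absurd ((hpu0un p ⟨h4.1.1.1, hup⟩).trans (hpu0un q ⟨hqP, huq⟩).symm) h4.1.1.2
        · refine ⟨t₀, ⟨Set.mem_insert_of_mem _ (Set.mem_insert_of_mem _ (Set.mem_insert _ _)),
            h⟩, ?_⟩
          rintro p ⟨hp, hup⟩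
          rcases Set.mem_insert_iff.mp hp with h1 | h1
          · subst h1
            rcases (hq1mem u).mp hup with h3 | h3
            · exact absurd h3 (fun hh => hd13 u hh h)
            · exact absurd h3 hux
          rcases Set.mem_insert_iff.mp h1 with h2 | h2
          · subst h2
            rcases (hq2mem u).mp hup with h3 | h3
            · exact absurd h3 (fun hh => hd23 u hh h)
            · exact absurd h3 huy
          rcases Set.mem_insert_iff.mp h2 with h4 | h4
          · exact h4
          · exact absurd ((hpu0un p ⟨h4.1.1.1, hup⟩).trans (hpu0un q ⟨hqP, huq⟩).symm) h4.1.1.2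
      · obtain ⟨pu, ⟨hpuP, hupu⟩, hpuun⟩ := huniq u hu
        have hpuq : pu ≠ q := fun h => huq (h ▸ hupu)
        have hpux : pu ≠ [x] := fun h => hux (by rw [h] at hupu; simpa using hupu)
        have hpuy : pu ≠ [y] := fun h => huy (by rw [h] at hupu; simpa using hupu)
        refine ⟨pu, ⟨Set.mem_insert_of_mem _ (Set.mem_insert_of_mem _
          (Set.mem_insert_of_mem _ ⟨⟨⟨hpuP, hpuq⟩, hpux⟩, hpuy⟩)), hupu⟩, ?_⟩
        rintro p ⟨hp, hup⟩
        rcases Set.mem_insert_iff.mp hp with h1 | h1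
        · subst h1
          rcases (hq1mem u).mp hup with h3 | h3
          · exact absurd ((hqcover u).mpr (Or.inl h3)) huq
          · exact absurd h3 hux
        rcases Set.mem_insert_iff.mp h1 with h2 | h2
        · subst h2
          rcases (hq2mem u).mp hup with h3 | h3
          · exact absurd ((hqcover u).mpr (Or.inr (Or.inl h3))) huq
          · exact absurd h3 huy
        rcases Set.mem_insert_iff.mp h2 with h4 | h4
        · exact absurd ((hqcover u).mpr (Or.inr (Or.inr (h4 ▸ hup)))) huq
        · exact hpuun p ⟨h4.1.1.1, hup⟩
    · intro p hp
      rcases Set.mem_insert_iff.mp hp with h | h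
      · exact ⟨x, h ▸ hq1last, hlx⟩
      rcases Set.mem_insert_iff.mp h with h' | h'
      · exact ⟨y, h' ▸ hq2last, hly⟩
      rcases Set.mem_insert_iff.mp h' with h'' | h''
      · exact h'' ▸ hq3end
      · obtain ⟨c, hc, hcl⟩ := hend p h''.1.1.1
        exact ⟨c, hc, hleafBA c hcl⟩


lemma transGen_lift {R Q : U → U → Prop} (h : ∀ a b, R a b → Relation.TransGen Q a b)
    {a b : U} (hT : Relation.TransGen R a b) : Relation.TransGen Q a b := by
  rw [← Relation.transGen_idem (r := Q)]
  exact Relation.TransGen.mono h _ _ hT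

/-- Let `N = (s, A)` be a DAG with no subdivision vertex in
which all leaves have indegree 1, let `(x, y)` be a reticulated cherry of `N`,
and let `N' = (s', A')` be the DAG obtained from `N` by the cherry-picking
operation on `(x, y)`.  If `N'` admits a leaf induced path partition, then so
does `N`. -/
theorem reticPick_leafIPP
    {U : Type*} (s : Set U) (A : U → U → Prop)
    (hdag : IsDag s A)
    (hnosub : ∀ v, ¬ IsSubdiv s A v)
    (hleafdeg : ∀ v, DLeaf s A v → ∃! w, A w v)
    (x y : U) (s' : Set U) (A' : U → U → Prop)
    (hpick : ReticPickAt s A x y s' A')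
    (h : ∃ P : Set (List U), IsLeafIPPOn s' A' P) :
    ∃ P : Set (List U), IsLeafIPPOn s A P := by
  obtain ⟨hfin, harc, hacyc⟩ := hdag
  obtain ⟨⟨hxyne, hlx, hly, -⟩, x', y', hxx, hyy, hrety', hxy, s₁, A₁, hs1, hs2⟩ := hpick
  obtain ⟨u₁, hu₁a, hu₁⟩ := hleafdeg x hlx
  have hxin : ∀ a, A a x → a = x' := fun a ha => (hu₁ a ha).trans (hu₁ x' hxx).symm
  obtain ⟨u₂, hu₂a, hu₂⟩ := hleafdeg y hly
  have hyin : ∀ a, A a y → a = y' := fun a ha => (hu₂ a ha).trans (hu₂ y' hyy).symm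
  have harc' : ∀ u v, A u v → u ∈ s ∧ v ∈ s := fun u v hh => harc hh
  have hxny' : x ≠ y' := fun hh => hlx.2 y (by rw [hh]; exact hyy)
  have hyny' : y ≠ y' := fun hh => hly.2 y (by rw [← hh] at hyy; exact hyy)
  have hynx' : y ≠ x' := fun hh => hly.2 y' (by rw [hh]; exact hxy)
  have hy'nx' : y' ≠ x' := fun hh => hacyc y' (.single (by rw [← hh] at hxy; exact hxy))
  have hBacyc : ∀ u, ¬ Relation.TransGen (fun a b => A a b ∧ ¬(a = x' ∧ b = y')) u u :=
    fun u hT => hacyc u (Relation.TransGen.mono (fun a b hb => hb.1) _ _ hT)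
  have hByy : A y' y ∧ ¬(y' = x' ∧ y = y') := ⟨hyy, fun hh => hyny' hh.2⟩
  have hBxx : A x' x ∧ ¬(x' = x' ∧ x = y') := ⟨hxx, fun hh => hxny' hh.2⟩
  have hfinal : (∃ P, GoodIPP s (fun a b => A a b ∧ ¬(a = x' ∧ b = y')) P) →
      ∃ P : Set (List U), IsLeafIPPOn s A P := by
    intro hp
    obtain ⟨P, hP⟩ := unpick s A x y x' y' hacyc harc' hlx hly hxx hyy hxy hxin hyin hxyne hp
    exact ⟨P, goodIPP_iff'.mp hP⟩
  rcases hs1 with ⟨hnsub1, hse1, hAe1⟩ | ⟨hsub1, z, o, hz, ho, hse1, hAe1⟩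
  · -- x' was not suppressed
    rw [hse1, hAe1] at hs2
    apply hfinal
    rcases hs2 with ⟨hnsub2, hse2, hAe2⟩ | ⟨hsub2, w, o₂, hw, ho₂, hse2, hAe2⟩
    · obtain ⟨P, hP⟩ := h
      rw [hse2, hAe2] at hP
      exact ⟨P, goodIPP_iff'.mpr hP⟩
    · obtain ⟨b₀, hb₀, hb₀u⟩ := hsub2.2.2
      have ho₂y : o₂ = y := (hb₀u o₂ ho₂).trans (hb₀u y hByy).symm
      obtain ⟨z₀, hz₀, hz₀u⟩ := hsub2.2.1
      have hin2 : ∀ a, A a y' ∧ ¬(a = x' ∧ y' = y') → a = w :=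
        fun a ha => (hz₀u a ha).trans (hz₀u w hw).symm
      have hout2 : ∀ b, A y' b ∧ ¬(y' = x' ∧ b = y') → b = y :=
        fun b hb => (hb₀u b hb).trans (hb₀u y hByy).symm
      refine unsuppress s (fun a b => A a b ∧ ¬(a = x' ∧ b = y')) y' w y hw hByy hin2 hout2
        (fun a ha => hyin a ha.1) hBacyc (harc hyy).1 hly.1 ?_
      obtain ⟨P, hP⟩ := h
      rw [ho₂y] at hAe2
      rw [hse2, hAe2] at hP
      exact ⟨P, goodIPP_iff'.mpr hP⟩
  · -- x' was suppressed
    obtain ⟨c₀, hc₀, hc₀u⟩ := hsub1.2.2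
    have hox : o = x := (hc₀u o ho).trans (hc₀u x hBxx).symm
    rw [hox] at hAe1
    obtain ⟨z₀, hz₀, hz₀u⟩ := hsub1.2.1
    have hin1 : ∀ a, A a x' ∧ ¬(a = x' ∧ x' = y') → a = z :=
      fun a ha => (hz₀u a ha).trans (hz₀u z hz).symm
    have hout1 : ∀ b, A x' b ∧ ¬(x' = x' ∧ b = y') → b = x :=
      fun b hb => (hc₀u b hb).trans (hc₀u x hBxx).symm
    rw [hse1, hAe1] at hs2
    have hliftarc : ∀ a b,
        ((fun a b => ((A a b ∧ ¬(a = x' ∧ b = y')) ∧ a ≠ x' ∧ b ≠ x') ∨ (a = z ∧ b = x)) :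
          U → U → Prop) a b →
        Relation.TransGen (fun a b => A a b ∧ ¬(a = x' ∧ b = y')) a b := by
      rintro a b (⟨h1, -, -⟩ | ⟨ha, hb⟩)
      · exact .single h1
      · rw [ha, hb]
        have h1 : Relation.TransGen (fun a b => A a b ∧ ¬(a = x' ∧ b = y')) z x' :=
          .single hz
        exact h1.tail hBxx
    have hacyc₁ : ∀ u, ¬ Relation.TransGen
        (fun a b => ((A a b ∧ ¬(a = x' ∧ b = y')) ∧ a ≠ x' ∧ b ≠ x') ∨ (a = z ∧ b = x)) u u :=
      fun u hT => hBacyc u (transGen_lift hliftarc hT)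
    have hA₁yy : ((A y' y ∧ ¬(y' = x' ∧ y = y')) ∧ y' ≠ x' ∧ y ≠ x') ∨ (y' = z ∧ y = x) :=
      Or.inl ⟨hByy, hy'nx', hynx'⟩
    have hoin₁ : ∀ a,
        (((A a y ∧ ¬(a = x' ∧ y = y')) ∧ a ≠ x' ∧ y ≠ x') ∨ (a = z ∧ y = x)) → a = y' := by
      rintro a (⟨h1, -, -⟩ | ⟨-, hb⟩)
      · exact hyin a h1.1
      · exact absurd hb hxyne.symm
    apply hfinal
    refine unsuppress s (fun a b => A a b ∧ ¬(a = x' ∧ b = y')) x' z x hz hBxx hin1 hout1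
      (fun a ha => hxin a ha.1) hBacyc (harc hxx).1 hlx.1 ?_
    rcases hs2 with ⟨hnsub2, hse2, hAe2⟩ | ⟨hsub2, w, o₂, hw, ho₂, hse2, hAe2⟩
    · obtain ⟨P, hP⟩ := h
      rw [hse2, hAe2] at hP
      exact ⟨P, goodIPP_iff'.mpr hP⟩
    · obtain ⟨b₀, hb₀, hb₀u⟩ := hsub2.2.2
      have ho₂y : o₂ = y := (hb₀u o₂ ho₂).trans (hb₀u y hA₁yy).symm
      obtain ⟨z₀, hz₀, hz₀u⟩ := hsub2.2.1
      have hin2 : ∀ a, (((A a y' ∧ ¬(a = x' ∧ y' = y')) ∧ a ≠ x' ∧ y' ≠ x') ∨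
          (a = z ∧ y' = x)) → a = w := fun a ha => (hz₀u a ha).trans (hz₀u w hw).symm
      have hout2 : ∀ b, (((A y' b ∧ ¬(y' = x' ∧ b = y')) ∧ y' ≠ x' ∧ b ≠ x') ∨
          (y' = z ∧ b = x)) → b = y := fun b hb => (hb₀u b hb).trans (hb₀u y hA₁yy).symm
      refine unsuppress (s \ {x'})
        (fun a b => ((A a b ∧ ¬(a = x' ∧ b = y')) ∧ a ≠ x' ∧ b ≠ x') ∨ (a = z ∧ b = x))
        y' w y hw hA₁yy hin2 hout2 hoin₁ hacyc₁ ⟨(harc hyy).1, hy'nx'⟩ ⟨hly.1, hynx'⟩ ?_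
      obtain ⟨P, hP⟩ := h
      rw [ho₂y] at hAe2
      rw [hse2, hAe2] at hP
      exact ⟨P, goodIPP_iff'.mpr hP⟩

end Paper
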